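/- Let Φ = {φ_1, …, φ_J} be a self-similar system on ℝ^d with attractor F and convex hull K = [F], and suppose Φ satisfies the tileset condition. Let 𝒢 be the set of connected components of the open set int K \ Φ(K). Then the tiles φ_w(G) — where w ranges over all finite words over {1,…,J} (including the empty word, with φ_∅ = id, and φ_w = φ_{w_k} ∘ ⋯ ∘ φ_{w_1}) and G ranges over 𝒢 — are nonempty open subsets of K \ F, distinct pairs (w, G) give pairwise disjoint tiles, and the closure of the union of all tiles equals the closure of K \ F. -/

import Mathlib

open Set Filter Topology

private lemma aux_pad_sum {M : Type*} [AddCommMonoid M] {m n : ℕ} (hmn : m ≤ n) (g : Fin m → M) :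
    ∑ i : Fin n, (if h : (i : ℕ) < m then g ⟨i, h⟩ else 0) = ∑ i : Fin m, g i := by
  rw [Fin.sum_univ_eq_sum_range (fun k => if h : k < m then g ⟨k, h⟩ else 0) n,
    ← Finset.sum_subset (Finset.range_subset_range.2 hmn)
      (fun k _ hk => dif_neg (by simpa using hk)),
    ← Fin.sum_univ_eq_sum_range (fun k => if h : k < m then g ⟨k, h⟩ else 0) m]
  exact Finset.sum_congr rfl fun i _ => by rw [dif_pos i.isLt]

private lemma aux_isCompact_convexHull {E : Type*} [NormedAddCommGroup E] [NormedSpace ℝ E]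
    [FiniteDimensional ℝ E] {s : Set E} (hs : IsCompact s) (hsne : s.Nonempty) :
    IsCompact (convexHull ℝ s) := by
  classical
  obtain ⟨z₀, hz₀⟩ := hsne
  set n := Module.finrank ℝ E + 1 with hn
  have hcont : Continuous (fun p : (Fin n → ℝ) × (Fin n → E) => ∑ i, p.1 i • p.2 i) :=
    continuous_finset_sum _ fun i _ =>
      ((continuous_apply i).comp continuous_fst).smul ((continuous_apply i).comp continuous_snd)
  have hC : IsCompact ((stdSimplex ℝ (Fin n)) ×ˢ (Set.pi Set.univ fun _ : Fin n => s)) :=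
    (isCompact_stdSimplex _ _).prod (isCompact_univ_pi fun _ => hs)
  have him : convexHull ℝ s =
      (fun p : (Fin n → ℝ) × (Fin n → E) => ∑ i, p.1 i • p.2 i) ''
        ((stdSimplex ℝ (Fin n)) ×ˢ (Set.pi Set.univ fun _ : Fin n => s)) := by
    apply Subset.antisymm
    · intro x hx
      obtain ⟨ι, hι, z, w, hzs, hai, hw, hw1, hx⟩ := eq_pos_convex_span_of_mem_convexHull hx
      have hcard : Fintype.card ι ≤ n := by
        refine le_trans hai.card_le_finrank_succ (Nat.add_le_add_right ?_ 1)
        exact Submodule.finrank_le _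
      set m := Fintype.card ι with hm
      have e : Fin m ≃ ι := (Fintype.equivFin ι).symm
      refine ⟨⟨fun i => if h : (i : ℕ) < m then w (e ⟨i, h⟩) else 0,
        fun i => if h : (i : ℕ) < m then z (e ⟨i, h⟩) else z₀⟩, ⟨⟨?_, ?_⟩, ?_⟩, ?_⟩
      · intro i
        dsimp only
        split
        · exact (hw _).le
        · exact le_refl 0
      · rw [aux_pad_sum hcard (fun i => w (e i)), Equiv.sum_comp e w]
        exact hw1
      · intro i _
        dsimp only
        split
        · exact hzs ⟨_, rfl⟩
        · exact hz₀
      · dsimp only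
        have : ∀ i : Fin n,
            (if h : (i : ℕ) < m then w (e ⟨i, h⟩) else 0) •
              (if h : (i : ℕ) < m then z (e ⟨i, h⟩) else z₀) =
            (if h : (i : ℕ) < m then w (e ⟨i, h⟩) • z (e ⟨i, h⟩) else 0) := by
          intro i
          by_cases h : (i : ℕ) < m
          · simp [h]
          · simp [h]
        rw [Finset.sum_congr rfl fun i _ => this i,
          aux_pad_sum hcard (fun i => w (e i) • z (e i)),
          Equiv.sum_comp e (fun j => w j • z j)]
        exact hx
    · rintro x ⟨⟨W, Z⟩, ⟨⟨hW0, hW1⟩, hZ⟩, rfl⟩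
      have := Finset.centerMass_mem_convexHull (Finset.univ : Finset (Fin n))
        (fun i _ => hW0 i) (by rw [hW1]; norm_num) (fun i _ => hZ i (mem_univ i))
      rwa [Finset.centerMass_eq_of_sum_1 _ _ hW1] at this
  rw [him]
  exact hC.image hcont

private lemma aux_subset_closure_interior {E : Type*} [NormedAddCommGroup E] [NormedSpace ℝ E]
    {s : Set E} (hs : Convex ℝ s) (hne : (interior s).Nonempty) :
    s ⊆ closure (interior s) := by
  obtain ⟨z, hz⟩ := hne
  intro y hy
  have hmem : ∀ t : ℝ, t ∈ Set.Ioc (0:ℝ) 1 → y + t • (z - y) ∈ interior s :=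
    fun t ht => hs.add_smul_sub_mem_interior hy hz ht
  have htend : Tendsto (fun k : ℕ => y + (1 / ((k : ℝ) + 1)) • (z - y)) atTop (𝓝 y) := by
    have h0 : Tendsto (fun k : ℕ => (1 / ((k : ℝ) + 1)) • (z - y)) atTop (𝓝 ((0:ℝ) • (z - y))) :=
      tendsto_one_div_add_atTop_nhds_zero_nat.smul_const (z - y)
    rw [zero_smul] at h0
    simpa using tendsto_const_nhds.add h0
  refine mem_closure_of_tendsto htend (Filter.Eventually.of_forall fun k => ?_)
  refine hmem _ ⟨by positivity, ?_⟩
  rw [div_le_one (by positivity)]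
  linarith [(Nat.cast_nonneg k : (0:ℝ) ≤ (k:ℝ))]


/-- Let `Φ = {φ_1, …, φ_J}` be a self-similar system on `ℝ^d`
with attractor `F` and convex hull `K = [F]`, satisfying the tileset condition.
Let `𝒢` be the set of connected components of `O := int K \ ⋃_j φ_j(K)`.  Then
the tiles `φ_w(G)` — where `w` ranges over all finite words (with
`φ_w = φ_{w_k} ∘ ⋯ ∘ φ_{w_1}`, the empty word giving the identity) and `G ∈ 𝒢` —
are nonempty open subsets of `K \ F`, distinct pairs `(w, G)` give pairwise
disjoint tiles, and the closure of the union of all tiles equals the closure of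
`K \ F`. -/
theorem stmt_10 (d J : ℕ) (hd : 1 ≤ d) (hJ : 2 ≤ J)
    (r : Fin J → ℝ) (hr : ∀ j, r j ∈ Set.Ioo (0 : ℝ) 1)
    (A : Fin J → (EuclideanSpace ℝ (Fin d) ≃ₗᵢ[ℝ] EuclideanSpace ℝ (Fin d)))
    (a : Fin J → EuclideanSpace ℝ (Fin d))
    (φ : Fin J → EuclideanSpace ℝ (Fin d) → EuclideanSpace ℝ (Fin d))
    (hφ : ∀ j x, φ j x = r j • (A j x) + a j)
    (F : Set (EuclideanSpace ℝ (Fin d)))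
    (hFne : F.Nonempty) (hFc : IsCompact F) (hF : F = ⋃ j, φ j '' F)
    (K : Set (EuclideanSpace ℝ (Fin d))) (hK : K = convexHull ℝ F)
    (htile1 : ¬ interior K ⊆ ⋃ j, φ j '' K)
    (htile2 : ∀ j ℓ, j ≠ ℓ → interior (φ j '' K) ∩ interior (φ ℓ '' K) = ∅)
    (O : Set (EuclideanSpace ℝ (Fin d))) (hO : O = interior K \ ⋃ j, φ j '' K)
    (𝒢 : Set (Set (EuclideanSpace ℝ (Fin d))))
    (h𝒢 : 𝒢 = {G | ∃ x ∈ O, G = connectedComponentIn O x})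
    (tile : List (Fin J) → Set (EuclideanSpace ℝ (Fin d)) → Set (EuclideanSpace ℝ (Fin d)))
    (htile : ∀ w G, tile w G = (fun x => w.foldl (fun y j => φ j y) x) '' G) :
    (∀ (w : List (Fin J)), ∀ G ∈ 𝒢,
        (tile w G).Nonempty ∧ IsOpen (tile w G) ∧ tile w G ⊆ K \ F) ∧
    (∀ (w w' : List (Fin J)) (G G' : Set (EuclideanSpace ℝ (Fin d))),
        G ∈ 𝒢 → G' ∈ 𝒢 → (w, G) ≠ (w', G') → Disjoint (tile w G) (tile w' G')) ∧
    closure (⋃ w : List (Fin J), ⋃ G ∈ 𝒢, tile w G) = closure (K \ F) := by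
  classical
  -- basic facts about φ
  have hrne : ∀ j, r j ≠ 0 := fun j => (hr j).1.ne'
  have hφh : ∀ j, φ j = ⇑(((A j).toHomeomorph.trans
      (Homeomorph.smulOfNeZero (r j) (hrne j))).trans (Homeomorph.addRight (a j))) := by
    intro j; funext x; simp [hφ j x, Homeomorph.smulOfNeZero]
  have hφcont : ∀ j, Continuous (φ j) := fun j => by rw [hφh j]; exact Homeomorph.continuous _
  have hφinj : ∀ j, Function.Injective (φ j) := fun j => by
    rw [hφh j]; exact (Homeomorph.injective _)
  have hφopen : ∀ j, IsOpenMap (φ j) := fun j => by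
    rw [hφh j]; exact Homeomorph.isOpenMap _
  have hφdist : ∀ j x y, dist (φ j x) (φ j y) = r j * dist x y := by
    intro j x y
    rw [hφ j x, hφ j y, dist_add_right, dist_smul₀, Real.norm_eq_abs, abs_of_pos (hr j).1,
      (A j).dist_map]
  -- affine structure
  set fA : Fin J → (EuclideanSpace ℝ (Fin d) →ᵃ[ℝ] EuclideanSpace ℝ (Fin d)) := fun j =>
    (AffineEquiv.constVAdd ℝ _ (a j)).toAffineMap.comp
      ((r j • ((A j).toLinearEquiv.toLinearMap))).toAffineMap with hfAdef
  have hfA : ∀ j, ⇑(fA j) = φ j := by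
    intro j; funext x
    simp [hfAdef, hφ j x, add_comm]
  have hφF : ∀ j, φ j '' F ⊆ F := fun j =>
    (Set.subset_iUnion (fun j => φ j '' F) j).trans hF.ge
  have hφK : ∀ j, φ j '' K ⊆ K := by
    intro j
    rw [hK, ← hfA j, AffineMap.image_convexHull]
    exact convexHull_mono (by rw [hfA j]; exact hφF j)
  -- facts about K
  have hFK : F ⊆ K := hK ▸ subset_convexHull ℝ F
  have hKconv : Convex ℝ K := hK ▸ convex_convexHull ℝ F
  have hKcomp : IsCompact K := hK ▸ aux_isCompact_convexHull hFc hFne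
  have hKjcomp : ∀ j, IsCompact (φ j '' K) := fun j => hKcomp.image (hφcont j)
  have hKjconv : ∀ j, Convex ℝ (φ j '' K) := fun j => by
    rw [← hfA j]; exact hKconv.affine_image (fA j)
  have hUc : IsClosed (⋃ j, φ j '' K) := isClosed_iUnion_of_finite fun j => (hKjcomp j).isClosed
  have hOopen : IsOpen O := hO ▸ isOpen_interior.sdiff hUc
  have hOne : O.Nonempty := by
    obtain ⟨x, hx1, hx2⟩ := Set.not_subset.1 htile1
    exact ⟨x, hO ▸ ⟨hx1, hx2⟩⟩
  have hOint : O ⊆ interior K := fun x hx => (hO ▸ hx).1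
  have hOU : ∀ x ∈ O, x ∉ ⋃ j, φ j '' K := fun x hx => (hO ▸ hx).2
  have hOK : O ⊆ K := fun x hx => interior_subset (hOint hx)
  have hintKne : (interior K).Nonempty := hOne.imp fun x hx => hOint hx
  have hKclint : K ⊆ closure (interior K) := aux_subset_closure_interior hKconv hintKne
  have hφKclint : ∀ j, φ j '' K ⊆ closure (interior (φ j '' K)) := by
    intro j
    refine aux_subset_closure_interior (hKjconv j) ?_
    obtain ⟨x, hx⟩ := hintKne
    exact ⟨φ j x, interior_maximal (Set.image_mono interior_subset) ((hφopen j) _ isOpen_interior)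
      ⟨x, hx, rfl⟩⟩
  have hFU : F ⊆ ⋃ j, φ j '' K := by
    intro x hx
    rw [hF] at hx
    obtain ⟨s, ⟨j, rfl⟩, y, hy, rfl⟩ := hx
    exact Set.mem_iUnion.2 ⟨j, y, hFK hy, rfl⟩
  -- the word maps
  set Ψ : List (Fin J) → EuclideanSpace ℝ (Fin d) → EuclideanSpace ℝ (Fin d) :=
    fun v x => v.foldr (fun j y => φ j y) x with hΨdef
  have hΨnil : Ψ [] = id := rfl
  have hΨcons : ∀ j v, Ψ (j :: v) = φ j ∘ Ψ v := fun j v => rfl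
  have hΨapp : ∀ v j, Ψ (v ++ [j]) = Ψ v ∘ φ j := by
    intro v j; funext x
    simp only [hΨdef, List.foldr_append, List.foldr, Function.comp_apply]
  have htile' : ∀ w G, tile w G = Ψ w.reverse '' G := by
    intro w G
    rw [htile]
    have hfun : (fun x => w.foldl (fun y j => φ j y) x) = Ψ w.reverse := by
      funext x
      exact (List.foldr_reverse).symm
    rw [hfun]
  have hΨcont : ∀ v, Continuous (Ψ v) := by
    intro v
    induction v with
    | nil => exact continuous_id
    | cons j u ih => rw [hΨcons]; exact (hφcont j).comp ih
  have hΨinj : ∀ v, Function.Injective (Ψ v) := by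
    intro v
    induction v with
    | nil => exact fun x y h => h
    | cons j u ih => rw [hΨcons]; exact (hφinj j).comp ih
  have hΨopen : ∀ v, IsOpenMap (Ψ v) := by
    intro v
    induction v with
    | nil => exact IsOpenMap.id
    | cons j u ih => rw [hΨcons]; exact (hφopen j).comp ih
  have hΨK : ∀ v, Ψ v '' K ⊆ K := by
    intro v
    induction v with
    | nil => simp [hΨnil]
    | cons j u ih =>
      rw [hΨcons, Set.image_comp]
      exact (Set.image_mono ih).trans (hφK j)
  -- tiles avoid F
  have hFd : ∀ v, ∀ x ∈ F, x ∉ Ψ v '' O := by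
    intro v
    induction v with
    | nil =>
      intro x hx hmem
      rw [hΨnil, Set.image_id] at hmem
      exact hOU x hmem (hFU hx)
    | cons m u ih =>
      intro x hx hmem
      rw [hΨcons, Set.image_comp] at hmem
      have hxF : x ∈ ⋃ ℓ, φ ℓ '' F := hF ▸ hx
      obtain ⟨s, ⟨ℓ, rfl⟩, z, hzF, hzx⟩ := hxF
      by_cases hlm : ℓ = m
      · subst hlm
        obtain ⟨z', hz', hz'x⟩ := hmem
        exact ih z hzF (hφinj ℓ (hz'x.trans hzx.symm) ▸ hz')
      · have hUopen : IsOpen (φ m '' (Ψ u '' O)) := (hφopen m) _ ((hΨopen u) _ hOopen)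
        have hUsub : φ m '' (Ψ u '' O) ⊆ interior (φ m '' K) :=
          interior_maximal (Set.image_mono ((Set.image_mono hOK).trans (hΨK u))) hUopen
        have hxcl : x ∈ closure (interior (φ ℓ '' K)) := hφKclint ℓ ⟨z, hFK hzF, hzx⟩
        obtain ⟨y, hy1, hy2⟩ := _root_.mem_closure_iff.1 hxcl _ hUopen hmem
        have : y ∈ interior (φ m '' K) ∩ interior (φ ℓ '' K) := ⟨hUsub hy1, hy2⟩
        rw [htile2 m ℓ (Ne.symm hlm)] at this
        exact this
  -- distinct words give disjoint images of O
  have hDis : ∀ v v', v ≠ v' → Disjoint (Ψ v '' O) (Ψ v' '' O) := by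
    have base : ∀ (m : Fin J) (u : List (Fin J)), Disjoint (Ψ [] '' O) (Ψ (m :: u) '' O) := by
      intro m u
      rw [hΨnil, Set.image_id, hΨcons, Set.image_comp]
      refine Set.disjoint_left.2 fun x hx hx' => ?_
      have : x ∈ ⋃ j, φ j '' K :=
        Set.mem_iUnion.2 ⟨m, (Set.image_mono ((Set.image_mono hOK).trans (hΨK u))) hx'⟩
      exact hOU x hx this
    intro v
    induction v with
    | nil =>
      intro v' hne
      match v' with
      | [] => exact absurd rfl hne
      | m :: u => exact base m u
    | cons m u ih =>
      intro v' hne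
      match v' with
      | [] => exact (base m u).symm
      | m' :: u' =>
        by_cases hmm : m = m'
        · subst hmm
          have huu : u ≠ u' := fun h => hne (by rw [h])
          rw [hΨcons, hΨcons, Set.image_comp, Set.image_comp]
          exact (Set.disjoint_image_iff (hφinj m)).2 (ih u' huu)
        · have h1 : Ψ (m :: u) '' O ⊆ interior (φ m '' K) := by
            rw [hΨcons, Set.image_comp]
            exact interior_maximal (Set.image_mono ((Set.image_mono hOK).trans (hΨK u)))
              ((hφopen m) _ ((hΨopen u) _ hOopen))
          have h2 : Ψ (m' :: u') '' O ⊆ interior (φ m' '' K) := by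
            rw [hΨcons, Set.image_comp]
            exact interior_maximal (Set.image_mono ((Set.image_mono hOK).trans (hΨK u')))
              ((hφopen m') _ ((hΨopen u') _ hOopen))
          refine Set.disjoint_left.2 fun x hx hx' => ?_
          have : x ∈ interior (φ m '' K) ∩ interior (φ m' '' K) := ⟨h1 hx, h2 hx'⟩
          rw [htile2 m m' hmm] at this
          exact this
  -- facts about components
  have hGopen : ∀ G ∈ 𝒢, IsOpen G := by
    rintro G hG
    rw [h𝒢] at hG
    obtain ⟨x, hx, rfl⟩ := hG
    exact hOopen.connectedComponentIn
  have hGsub : ∀ G ∈ 𝒢, G ⊆ O := by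
    rintro G hG
    rw [h𝒢] at hG
    obtain ⟨x, hx, rfl⟩ := hG
    exact connectedComponentIn_subset O x
  have hGne : ∀ G ∈ 𝒢, G.Nonempty := by
    rintro G hG
    rw [h𝒢] at hG
    obtain ⟨x, hx, rfl⟩ := hG
    exact ⟨x, mem_connectedComponentIn hx⟩
  have hGdisj : ∀ G ∈ 𝒢, ∀ G' ∈ 𝒢, G ≠ G' → Disjoint G G' := by
    rintro G hG G' hG' hne
    rw [h𝒢] at hG hG'
    obtain ⟨x, hx, rfl⟩ := hG
    obtain ⟨x', hx', rfl⟩ := hG'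
    refine Set.disjoint_left.2 fun z hz hz' => ?_
    exact hne ((connectedComponentIn_eq hz).trans (connectedComponentIn_eq hz').symm)
  -- part 1
  refine ⟨?_, ?_, ?_⟩
  · intro w G hG
    rw [htile' w G]
    refine ⟨(hGne G hG).image _, (hΨopen w.reverse) _ (hGopen G hG), ?_⟩
    intro x hx
    have hxO : x ∈ Ψ w.reverse '' O := Set.image_mono (hGsub G hG) hx
    refine ⟨(hΨK w.reverse) (Set.image_mono hOK hxO), fun hxF => hFd w.reverse x hxF hxO⟩
  -- part 2
  · intro w w' G G' hG hG' hne
    rw [htile' w G, htile' w' G']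
    by_cases hww : w = w'
    · subst hww
      have hGG : G ≠ G' := fun h => hne (by rw [h])
      exact (Set.disjoint_image_iff (hΨinj w.reverse)).2 (hGdisj G hG G' hG' hGG)
    · have hrev : w.reverse ≠ w'.reverse := fun h => hww (List.reverse_injective h)
      exact (hDis _ _ hrev).mono (Set.image_mono (hGsub G hG)) (Set.image_mono (hGsub G' hG'))
  -- part 3
  · -- the union of all tiles is the union over words of `Ψ v '' O`
    have hOun : (⋃ G ∈ 𝒢, G) = O := by
      apply Set.Subset.antisymm (Set.iUnion₂_subset hGsub)
      intro x hx
      exact Set.mem_iUnion₂.2 ⟨connectedComponentIn O x,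
        by rw [h𝒢]; exact ⟨x, hx, rfl⟩, mem_connectedComponentIn hx⟩
    have hUeq : (⋃ w : List (Fin J), ⋃ G ∈ 𝒢, tile w G) = ⋃ v : List (Fin J), Ψ v '' O := by
      apply Set.Subset.antisymm
      · refine Set.iUnion_subset fun w => Set.iUnion₂_subset fun G hG => ?_
        rw [htile' w G]
        exact (Set.image_mono (hGsub G hG)).trans
          (Set.subset_iUnion (fun v => Ψ v '' O) w.reverse)
      · refine Set.iUnion_subset fun v => ?_
        intro x hx
        rw [← hOun, Set.image_iUnion₂] at hx
        obtain ⟨G, hG, hxG⟩ := Set.mem_iUnion₂.1 hx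
        refine Set.mem_iUnion.2 ⟨v.reverse, Set.mem_iUnion₂.2 ⟨G, hG, ?_⟩⟩
        rw [htile', List.reverse_reverse]
        exact hxG
    have hsubKF : ∀ v : List (Fin J), Ψ v '' O ⊆ K \ F := by
      intro v x hx
      exact ⟨(hΨK v) (Set.image_mono hOK hx), fun hxF => hFd v x hxF hx⟩
    rw [hUeq]
    -- the iterated-image sets `S n`
    set S : ℕ → Set (EuclideanSpace ℝ (Fin d)) :=
      fun n => Nat.rec K (fun _ Sn => ⋃ j, φ j '' Sn) n with hSdef
    have hS0 : S 0 = K := rfl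
    have hSs : ∀ n, S (n + 1) = ⋃ j, φ j '' S n := fun n => rfl
    -- the contraction ratio bound
    have hJ0 : 0 < J := by omega
    set j0 : Fin J := ⟨0, hJ0⟩ with hj0
    set c : ℝ := Finset.univ.sup' ⟨j0, Finset.mem_univ j0⟩ r with hc
    have hc1 : ∀ j, r j ≤ c := fun j => Finset.le_sup' r (Finset.mem_univ j)
    have hc0 : 0 < c := lt_of_lt_of_le (hr j0).1 (hc1 j0)
    have hclt : c < 1 := (Finset.sup'_lt_iff _).2 fun j _ => (hr j).2
    set D : ℝ := Metric.diam K with hD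
    have hD0 : 0 ≤ D := Metric.diam_nonneg
    obtain ⟨y0, hy0⟩ := id hFne
    have hdistS : ∀ n, ∀ x ∈ S n, Metric.infDist x F ≤ c ^ n * D := by
      intro n
      induction n with
      | zero =>
        intro x hx
        rw [hS0] at hx
        rw [pow_zero, one_mul]
        exact (Metric.infDist_le_dist_of_mem hy0).trans
          (Metric.dist_le_diam_of_mem hKcomp.isBounded hx (hFK hy0))
      | succ n ih =>
        intro x hx
        rw [hSs] at hx
        obtain ⟨s, ⟨j, rfl⟩, z, hz, rfl⟩ := hx
        refine le_of_forall_pos_le_add fun ε hε => ?_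
        obtain ⟨y, hyF, hdzy⟩ := (Metric.infDist_lt_iff hFne).1
          (lt_add_of_pos_right (Metric.infDist z F) hε)
        have h1 : Metric.infDist (φ j z) F ≤ r j * dist z y := by
          rw [← hφdist j z y]
          exact Metric.infDist_le_dist_of_mem (hφF j ⟨y, hyF, rfl⟩)
        have h2 := ih z hz
        have h3 : (0:ℝ) ≤ dist z y := dist_nonneg
        have h4 : (0:ℝ) ≤ Metric.infDist z F := Metric.infDist_nonneg
        have h5 := hc1 j
        have h6 := (hr j).1
        rw [pow_succ]
        nlinarith [pow_nonneg hc0.le n]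
    have hesc : ∀ x ∈ K \ F, ∃ n, x ∉ S n := by
      rintro x ⟨hxK, hxF⟩
      by_contra hcon
      push_neg at hcon
      have hle : Metric.infDist x F ≤ 0 := by
        have htend : Filter.Tendsto (fun n : ℕ => c ^ n * D) Filter.atTop (𝓝 (0 * D)) :=
          (tendsto_pow_atTop_nhds_zero_of_lt_one hc0.le hclt).mul_const D
        rw [zero_mul] at htend
        exact ge_of_tendsto htend (Filter.Eventually.of_forall fun n => hdistS n x (hcon n))
      have h0 : Metric.infDist x F = 0 := le_antisymm hle Metric.infDist_nonneg
      have : x ∈ F := by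
        rw [← hFc.isClosed.closure_eq]
        exact (Metric.mem_closure_iff_infDist_zero hFne).2 h0
      exact hxF this
    have hword : ∀ n, ∀ x ∈ S n, ∃ v : List (Fin J), v.length = n ∧ x ∈ Ψ v '' K := by
      intro n
      induction n with
      | zero =>
        intro x hx
        exact ⟨[], rfl, by rw [hΨnil, Set.image_id]; exact hx⟩
      | succ n ih =>
        intro x hx
        rw [hSs] at hx
        obtain ⟨s, ⟨j, rfl⟩, z, hz, rfl⟩ := hx
        obtain ⟨v, hlen, hmem⟩ := ih z hz
        refine ⟨j :: v, by simp [hlen], ?_⟩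
        rw [hΨcons, Set.image_comp]
        exact Set.mem_image_of_mem (φ j) hmem
    have hwordsub : ∀ v : List (Fin J), Ψ v '' K ⊆ S v.length := by
      intro v
      induction v with
      | nil => rw [hΨnil, Set.image_id]; exact hS0.ge
      | cons j u ih =>
        rw [hΨcons, Set.image_comp]
        refine (Set.image_mono ih).trans ?_
        rw [List.length_cons, hSs]
        exact Set.subset_iUnion (fun j => φ j '' S u.length) j
    -- density of the tiles in `K \ F`
    have hdense : K \ F ⊆ closure (⋃ v : List (Fin J), Ψ v '' O) := by
      intro x hx
      have hfind := hesc x hx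
      set n₀ := Nat.find hfind with hn₀def
      have hn₀ : x ∉ S n₀ := Nat.find_spec hfind
      have hne0 : n₀ ≠ 0 := by
        intro h0
        rw [h0, hS0] at hn₀
        exact hn₀ hx.1
      obtain ⟨m, hm⟩ := Nat.exists_eq_succ_of_ne_zero hne0
      have hxm : x ∈ S m := by
        by_contra hxm
        exact Nat.find_min hfind (by omega) hxm
      obtain ⟨v, hlen, y, hyK, rfl⟩ := hword m x hxm
      have hyU : y ∉ ⋃ j, φ j '' K := by
        intro hmem
        obtain ⟨s, ⟨j, rfl⟩, z, hzK, rfl⟩ := hmem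
        have h1 : Ψ v (φ j z) ∈ Ψ (v ++ [j]) '' K := by
          rw [hΨapp]
          exact Set.mem_image_of_mem (Ψ v ∘ φ j) hzK
        have h2 : Ψ v (φ j z) ∈ S (m + 1) := by
          have := hwordsub (v ++ [j]) h1
          rwa [List.length_append, hlen, List.length_singleton] at this
        rw [hm] at hn₀
        exact hn₀ h2
      have hycl : y ∈ closure O := by
        rw [_root_.mem_closure_iff]
        intro U hUopen hyU'
        have h2 : y ∈ closure (interior K) := hKclint hyK
        obtain ⟨z, hz1, hz2⟩ := _root_.mem_closure_iff.1 h2 (U ∩ (⋃ j, φ j '' K)ᶜ)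
          (hUopen.inter hUc.isOpen_compl) ⟨hyU', hyU⟩
        refine ⟨z, hz1.1, ?_⟩
        rw [hO]
        exact ⟨hz2, hz1.2⟩
      have h3 : Ψ v y ∈ closure (Ψ v '' O) :=
        image_closure_subset_closure_image (hΨcont v) (Set.mem_image_of_mem (Ψ v) hycl)
      exact closure_mono (Set.subset_iUnion (fun v => Ψ v '' O) v) h3
    apply Set.Subset.antisymm
    · exact closure_mono (Set.iUnion_subset hsubKF)
    · rw [← closure_closure (s := ⋃ v : List (Fin J), Ψ v '' O)]
      exact closure_mono hdense
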